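/- A function g : BM^m → Pow(BM^n) is implementable by a circuit with only simple registers (g ∈ Fun_S) if and only if g has a natural subfunction, i.e., a function f : BM^m → Pow(BM^n) that is bit-wise, closed, and specific with f(x) ⊆ g(x) for all x ∈ BM^m. -/

import Mathlib

set_option linter.unusedVariables false

attribute [local instance] Classical.propDecidable

/-- Signal values: stable `zero`, `one`, and metastable `meta`. -/
inductive BM : Type
  | zero
  | one
  | meta'
  deriving DecidableEq

/-- Embedding of stable Boolean values into `BM`. -/
def BM.ofBool : Bool → BM
  | false => BM.zero
  | true => BM.one

/-- `inResM x y` means `y ∈ ResM(x)`, the set of partial resolutions of `x`. -/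
def inResM {k : ℕ} (x y : Fin k → BM) : Prop :=
  ∀ i, x i = y i ∨ x i = BM.meta'

/-- `inRes x y` means `y ∈ Res(x)`, i.e. `y` is a complete (stable) resolution of `x`. -/
def inRes {k : ℕ} (x y : Fin k → BM) : Prop :=
  inResM x y ∧ ∀ i, y i ≠ BM.meta'

/-- The complete resolutions of `x`, viewed as Boolean words. -/
def boolRes {k : ℕ} (x : Fin k → BM) : Set (Fin k → Bool) :=
  { z | ∀ i, x i = BM.ofBool (z i) ∨ x i = BM.meta' }

/-- The metastable (Kleene) extension `f_M : BM^k → BM` of a Boolean function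
`f : B^k → B`: it outputs a stable value `b` iff all complete resolutions of the
input evaluate to `b` under `f`, and `meta` otherwise. -/
noncomputable def kleene {k : ℕ} (f : (Fin k → Bool) → Bool) (x : Fin k → BM) : BM :=
  if ∀ z ∈ boolRes x, f z = false then BM.zero
  else if ∀ z ∈ boolRes x, f z = true then BM.one
  else BM.meta'

/-- Combinational logic with `m` input nodes: formulas built from inputs,
`BM`-constants (gates of indegree 0), and gates computing the metastable extension
of a Boolean function of their in-neighbors.  (A DAG evaluates exactly like the
formula obtained by unsharing, so this faithfully captures evaluation of
combinational logic DAGs.) -/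
inductive Comb (m : ℕ) : Type
  | input : Fin m → Comb m
  | const : BM → Comb m
  | gate : (j : ℕ) → ((Fin j → Bool) → Bool) → (Fin j → Comb m) → Comb m

/-- Recursive evaluation of combinational logic on input `x ∈ BM^m`. -/
noncomputable def Comb.eval {m : ℕ} (x : Fin m → BM) : Comb m → BM
  | .input i => x i
  | .const b => b
  | .gate _ f cs => kleene f (fun t => (cs t).eval x)

/-- Register types: simple, mask-0, mask-1. -/
inductive RegType : Type
  | simple
  | mask0
  | mask1
  deriving DecidableEq

/-- `regRead t b (o, b')` holds iff a register of type `t` in state `b` can be read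
with read value `o`, moving to state `b'`:  a register in a stable state yields that
state and keeps it; a simple register in state `meta` yields `meta` and stays `meta`;
a mask-`c` register in state `meta` either yields `c` staying in state `meta`, or
yields `meta` changing its state to `1 - c`. -/
def regRead : RegType → BM → BM × BM → Prop
  | _, BM.zero, p => p = (BM.zero, BM.zero)
  | _, BM.one, p => p = (BM.one, BM.one)
  | RegType.simple, BM.meta', p => p = (BM.meta', BM.meta')
  | RegType.mask0, BM.meta', p => p = (BM.zero, BM.meta') ∨ p = (BM.meta', BM.one)
  | RegType.mask1, BM.meta', p => p = (BM.one, BM.meta') ∨ p = (BM.meta', BM.zero)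

/-- A circuit with `m` input, `k` local and `n` output registers: a type for each
register, combinational logic with `m + k` input nodes (one per non-output register)
and `k + n` output nodes (one per non-input register), and an initialization of the
non-input registers. -/
structure Circuit (m k n : ℕ) : Type where
  inType : Fin m → RegType
  locType : Fin k → RegType
  outType : Fin n → RegType
  logic : Fin (k + n) → Comb (m + k)
  init : Fin (k + n) → BM

/-- A state of a circuit: values of input, local, and output registers. -/
structure CState (m k n : ℕ) : Type where
  inp : Fin m → BM
  loc : Fin k → BM
  out : Fin n → BM

/-- A state as a word in `BM^{m+k+n}`. -/
def CState.toVec {m k n : ℕ} (s : CState m k n) : Fin (m + (k + n)) → BM :=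
  Fin.append s.inp (Fin.append s.loc s.out)

/-- Read phase: `o ∈ BM^{m+k}` are possible read values of the non-output registers
in state `s`, and `ι'` the corresponding successor states of the input registers. -/
def ReadRel {m k n : ℕ} (C : Circuit m k n) (s : CState m k n)
    (o : Fin (m + k) → BM) (ι' : Fin m → BM) : Prop :=
  (∀ i : Fin m, regRead (C.inType i) (s.inp i) (o (Fin.castAdd k i), ι' i)) ∧
  (∀ j : Fin k, ∃ st', regRead (C.locType j) (s.loc j) (o (Fin.natAdd m j), st'))

/-- Evaluation phase: `f^G` applied to the read values. -/
noncomputable def evalLogic {m k n : ℕ} (C : Circuit m k n) (o : Fin (m + k) → BM) :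
    Fin (k + n) → BM :=
  fun j => (C.logic j).eval o

/-- `Write^C(s)`: possible values written to the non-input registers. -/
def WriteSet {m k n : ℕ} (C : Circuit m k n) (s : CState m k n) :
    Set (Fin (k + n) → BM) :=
  { w | ∃ o ι', ReadRel C s o ι' ∧ inResM (evalLogic C o) w }

/-- Successor-state relation: read all non-output registers, evaluate the logic,
and write an arbitrary partial resolution of the result to the non-input registers. -/
def Succ {m k n : ℕ} (C : Circuit m k n) (s s' : CState m k n) : Prop :=
  ∃ o ι', ReadRel C s o ι' ∧ s'.inp = ι' ∧
    inResM (evalLogic C o) (Fin.append s'.loc s'.out)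

/-- `reach C r s₀ = S^C_r(s₀)`: states reachable in `r` rounds from `s₀`. -/
def reach {m k n : ℕ} (C : Circuit m k n) : ℕ → CState m k n → Set (CState m k n)
  | 0, s => {s}
  | r + 1, s => { t | ∃ u ∈ reach C r s, Succ C u t }

/-- The initial state of `C` with input `ι`. -/
def initState {m k n : ℕ} (C : Circuit m k n) (ι : Fin m → BM) : CState m k n :=
  ⟨ι, fun j => C.init (Fin.castAdd n j), fun j => C.init (Fin.natAdd k j)⟩

/-- `C_r(ι)`: possible outputs after `r` rounds on input `ι`. -/
def Cout {m k n : ℕ} (C : Circuit m k n) (r : ℕ) (ι : Fin m → BM) :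
    Set (Fin n → BM) :=
  { y | ∃ s ∈ reach C r (initState C ι), y = s.out }

/-- `r` rounds of `C` implement `f` iff `C_r(ι) ⊆ f(ι)` for all inputs `ι`. -/
def Implements {m k n : ℕ} (C : Circuit m k n) (r : ℕ)
    (f : (Fin m → BM) → Set (Fin n → BM)) : Prop :=
  ∀ ι, Cout C r ι ⊆ f ι

/-- All registers of the circuit are simple. -/
def OnlySimple {m k n : ℕ} (C : Circuit m k n) : Prop :=
  (∀ i, C.inType i = RegType.simple) ∧ (∀ j, C.locType j = RegType.simple) ∧
    (∀ j, C.outType j = RegType.simple)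

/-- `Fun_S^r`: functions implementable by `r` rounds of circuits with only simple
registers. -/
def FunS (r m n : ℕ) : Set ((Fin m → BM) → Set (Fin n → BM)) :=
  { f | ∃ k, ∃ C : Circuit m k n, OnlySimple C ∧ Implements C r f }

/-- `Fun_M^r`: functions implementable by `r` rounds of circuits with arbitrary
register types. -/
def FunM (r m n : ℕ) : Set ((Fin m → BM) → Set (Fin n → BM)) :=
  { f | ∃ k, ∃ C : Circuit m k n, Implements C r f }

/-- A pivotal sequence over `BM^N`: consecutive elements differ in exactly one bit,
and that bit is `meta` in one of the two elements. -/
def PivotalSeq {N ℓ : ℕ} (x : Fin (ℓ + 1) → Fin N → BM) : Prop :=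
  ∀ i : Fin ℓ,
    ∃ j : Fin N,
      x i.castSucc j ≠ x i.succ j ∧
      (x i.castSucc j = BM.meta' ∨ x i.succ j = BM.meta') ∧
      ∀ j' : Fin N, x i.castSucc j' ≠ x i.succ j' → j' = j

/-- A function `f : BM^m → Pow(BM^n)` is natural iff it is bit-wise and closed
(a product of component functions each taking values in `{{0}, {1}, BM}`)
and specific (stabilizing the input restricts the output). -/
def IsNatural {m n : ℕ} (f : (Fin m → BM) → Set (Fin n → BM)) : Prop :=
  (∃ g : Fin n → (Fin m → BM) → Set BM,
      (∀ i x, g i x = {BM.zero} ∨ g i x = {BM.one} ∨ g i x = (Set.univ : Set BM)) ∧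
      (∀ x, f x = { y | ∀ i, y i ∈ g i x })) ∧
  (∀ x y, inRes x y → f y ⊆ f x)

/-- The `i`-th component of the metastable closure of `f : B^m → B^n`. -/
noncomputable def mclosureC {m n : ℕ} (f : (Fin m → Bool) → Fin n → Bool)
    (x : Fin m → BM) (i : Fin n) : Set BM :=
  if ∀ z ∈ boolRes x, f z i = false then {BM.zero}
  else if ∀ z ∈ boolRes x, f z i = true then {BM.one}
  else Set.univ

/-- The metastable closure `[f]_M : BM^m → Pow(BM^n)` of `f : B^m → B^n`. -/
noncomputable def mclosure {m n : ℕ} (f : (Fin m → Bool) → Fin n → Bool)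
    (x : Fin m → BM) : Set (Fin n → BM) :=
  { y | ∀ i, y i ∈ mclosureC f x i }

/-! ### Auxiliary material -/

/-- The set of partial resolutions of a single value. -/
def resSet (v : BM) : Set BM := {w | v = w ∨ v = BM.meta'}

lemma resSet_closed (v : BM) :
    resSet v = {BM.zero} ∨ resSet v = {BM.one} ∨ resSet v = Set.univ := by
  cases v with
  | zero => left; ext w; simp [resSet, eq_comm]
  | one => right; left; ext w; simp [resSet, eq_comm]
  | meta' => right; right; ext w; simp [resSet]

lemma resSet_mono {a b : BM} (h : a = b ∨ a = BM.meta') : resSet b ⊆ resSet a := by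
  rcases h with rfl | rfl
  · exact subset_rfl
  · intro w _; right; rfl

lemma boolRes_mono {k : ℕ} {x y : Fin k → BM} (h : inResM x y) :
    boolRes y ⊆ boolRes x := by
  intro z hz i
  rcases h i with h' | h'
  · rw [h']; exact hz i
  · right; exact h'

lemma exists_boolRes {k : ℕ} (x : Fin k → BM) : ∃ z, z ∈ boolRes x := by
  refine ⟨fun i => if x i = BM.one then true else false, fun i => ?_⟩
  cases hx : x i <;> simp [hx, BM.ofBool]

lemma kleene_mono {k : ℕ} (f : (Fin k → Bool) → Bool) {x y : Fin k → BM}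
    (h : inResM x y) : kleene f x = kleene f y ∨ kleene f x = BM.meta' := by
  unfold kleene
  by_cases h0 : ∀ z ∈ boolRes x, f z = false
  · have h0' : ∀ z ∈ boolRes y, f z = false := fun z hz => h0 z (boolRes_mono h hz)
    rw [if_pos h0, if_pos h0']
    left; rfl
  · by_cases h1 : ∀ z ∈ boolRes x, f z = true
    · have h1' : ∀ z ∈ boolRes y, f z = true := fun z hz => h1 z (boolRes_mono h hz)
      have h0' : ¬ ∀ z ∈ boolRes y, f z = false := by
        obtain ⟨z, hz0⟩ := exists_boolRes y
        intro hc
        have := hc z hz0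
        have := h1' z hz0
        simp_all
      rw [if_neg h0, if_pos h1, if_neg h0', if_pos h1']
      left; rfl
    · rw [if_neg h0, if_neg h1]
      right; rfl

lemma eval_mono {m : ℕ} {x y : Fin m → BM} (h : inResM x y) :
    ∀ c : Comb m, c.eval x = c.eval y ∨ c.eval x = BM.meta' := by
  intro c
  induction c with
  | input i => exact h i
  | const b => left; rfl
  | gate j f cs ih =>
    simp only [Comb.eval]
    exact kleene_mono f (fun t => ih t)

lemma regRead_simple {b : BM} {p : BM × BM} (h : regRead RegType.simple b p) :
    p = (b, b) := by
  cases b <;> simpa [regRead] using h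

lemma readRel_simple {m k n : ℕ} {C : Circuit m k n} (hC : OnlySimple C)
    {s : CState m k n} {o : Fin (m + k) → BM} {ι' : Fin m → BM}
    (h : ReadRel C s o ι') :
    o = Fin.append s.inp s.loc ∧ ι' = s.inp := by
  obtain ⟨h1, h2⟩ := h
  constructor
  · funext j
    refine Fin.addCases (fun i => ?_) (fun i => ?_) j
    · have h' := h1 i
      rw [hC.1 i] at h'
      rw [Fin.append_left]
      exact congrArg Prod.fst (regRead_simple h')
    · obtain ⟨st', hst⟩ := h2 i
      rw [hC.2.1 i] at hst
      rw [Fin.append_right]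
      exact congrArg Prod.fst (regRead_simple hst)
  · funext i
    have h' := h1 i
    rw [hC.1 i] at h'
    exact congrArg Prod.snd (regRead_simple h')

/-- Characterization of the outputs of one round of a simple-register circuit. -/
lemma cout_one {m k n : ℕ} {C : Circuit m k n} (hC : OnlySimple C) (ι : Fin m → BM) :
    Cout C 1 ι = { y | ∀ i : Fin n,
      y i ∈ resSet (evalLogic C
        (Fin.append ι (fun j => C.init (Fin.castAdd n j))) (Fin.natAdd k i)) } := by
  ext y
  constructor
  · rintro ⟨s, hs, rfl⟩
    obtain ⟨u, hu, hsucc⟩ := hs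
    have hu' : u = initState C ι := hu
    subst hu'
    obtain ⟨o, ι', hrr, hinp, hres⟩ := hsucc
    obtain ⟨ho, -⟩ := readRel_simple hC hrr
    subst ho
    intro i
    have h' := hres (Fin.natAdd k i)
    rw [Fin.append_right] at h'
    exact h'
  · intro hy
    refine ⟨⟨ι,
      fun j => evalLogic C (Fin.append ι (fun j => C.init (Fin.castAdd n j)))
        (Fin.castAdd n j), y⟩, ⟨initState C ι, rfl, ?_⟩, rfl⟩
    refine ⟨Fin.append ι (fun j => C.init (Fin.castAdd n j)), ι, ⟨?_, ?_⟩, rfl, ?_⟩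
    · intro i
      rw [hC.1 i, Fin.append_left]
      show regRead RegType.simple (ι i) (ι i, ι i)
      cases ι i <;> simp [regRead]
    · intro j
      refine ⟨C.init (Fin.castAdd n j), ?_⟩
      rw [hC.2.1 j, Fin.append_right]
      show regRead RegType.simple (C.init (Fin.castAdd n j)) _
      cases C.init (Fin.castAdd n j) <;> simp [regRead]
    · intro j
      refine Fin.addCases (fun j' => ?_) (fun i => ?_) j
      · rw [Fin.append_left]
        left; rfl
      · rw [Fin.append_right]
        exact hy i

lemma ite_bool_true {P : Prop} [Decidable P] :
    (if P then true else false) = true ↔ P := by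
  split_ifs with h <;> simp [h]

lemma ite_bool_false {P : Prop} [Decidable P] :
    (if P then true else false) = false ↔ ¬ P := by
  split_ifs with h <;> simp [h]

/-- `g ∈ Fun_S` (implementable by a circuit with only simple
registers) iff `g` has a natural subfunction. -/
theorem funS_iff_natural_subfunction {m n : ℕ}
    (g : (Fin m → BM) → Set (Fin n → BM)) :
    g ∈ FunS 1 m n ↔
      ∃ f : (Fin m → BM) → Set (Fin n → BM), IsNatural f ∧ ∀ x, f x ⊆ g x := by
  constructor
  · -- forward: a simple-register circuit yields a natural subfunction
    rintro ⟨k, C, hC, himpl⟩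
    refine ⟨fun x => { y | ∀ i : Fin n,
      y i ∈ resSet (evalLogic C
        (Fin.append x (fun j => C.init (Fin.castAdd n j))) (Fin.natAdd k i)) },
      ⟨⟨fun i x => resSet (evalLogic C
          (Fin.append x (fun j => C.init (Fin.castAdd n j))) (Fin.natAdd k i)),
        fun i x => resSet_closed _, fun x => rfl⟩, ?_⟩, ?_⟩
    · -- specific
      rintro x y ⟨hxy, -⟩ w hw i
      have hres : inResM (Fin.append x (fun j => C.init (Fin.castAdd n j)))
          (Fin.append y (fun j => C.init (Fin.castAdd n j))) := by
        intro j
        refine Fin.addCases (fun i' => ?_) (fun i' => ?_) j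
        · rw [Fin.append_left, Fin.append_left]; exact hxy i'
        · rw [Fin.append_right, Fin.append_right]; left; rfl
      exact resSet_mono (eval_mono hres (C.logic (Fin.natAdd k i))) (hw i)
    · -- subfunction of g
      intro x
      have h' := himpl x
      rw [cout_one hC x] at h'
      exact h'
  · -- backward: a natural subfunction can be implemented
    rintro ⟨f, ⟨⟨gc, hclosed, hbit⟩, hspec⟩, hsub⟩
    have hne : ∀ i x, ∃ b, b ∈ gc i x := by
      intro i x
      rcases hclosed i x with h | h | h <;> rw [h]
      exacts [⟨BM.zero, rfl⟩, ⟨BM.one, rfl⟩, ⟨BM.zero, trivial⟩]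
    choose e he using hne
    have hcomp : ∀ x y, inRes x y → ∀ i, gc i y ⊆ gc i x := by
      intro x y hxy i b hb
      have hw : (fun j => if j = i then b else e j y) ∈ f y := by
        rw [hbit y]
        intro j
        by_cases hji : j = i
        · subst hji; simp [hb]
        · simp [hji, he j y]
      have h1 := hspec x y hxy hw
      rw [hbit x] at h1
      have h2 := h1 i
      simpa using h2
    -- the Boolean functions realizing the components
    set hb : Fin n → (Fin m → Bool) → Bool :=
      fun i z => if gc i (fun j => BM.ofBool (z j)) = {BM.one} then true else false
      with hhb
    -- key property
    have hstab : ∀ (i : Fin n) (x : Fin m → BM), ∀ z ∈ boolRes x,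
        gc i (fun j => BM.ofBool (z j)) ⊆ gc i x := by
      intro i x z hz
      refine hcomp x _ ⟨fun j => hz j, fun j => ?_⟩ i
      cases z j <;> simp [BM.ofBool]
    have hzero_mem : ∀ (i : Fin n) (x : Fin m → Bool),
        gc i (fun j => BM.ofBool (x j)) ≠ {BM.one} →
        BM.zero ∈ gc i (fun j => BM.ofBool (x j)) := by
      intro i x hnot
      rcases hclosed i (fun j => BM.ofBool (x j)) with hc | hc | hc
      · rw [hc]; rfl
      · exact absurd hc hnot
      · rw [hc]; trivial
    have hkey : ∀ (i : Fin n) (x : Fin m → BM),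
        resSet (kleene (hb i) x) ⊆ gc i x := by
      intro i x w hw
      obtain ⟨z0, hz0⟩ := exists_boolRes x
      unfold kleene at hw
      by_cases h0 : ∀ z ∈ boolRes x, hb i z = false
      · rw [if_pos h0] at hw
        have hw' : w = BM.zero := by
          rcases hw with h | h
          · exact h.symm
          · cases h
        have hnot := (ite_bool_false.mp (h0 z0 hz0))
        rw [hw']
        exact hstab i x z0 hz0 (hzero_mem i z0 hnot)
      · rw [if_neg h0] at hw
        by_cases h1 : ∀ z ∈ boolRes x, hb i z = true
        · rw [if_pos h1] at hw
          have hw' : w = BM.one := by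
            rcases hw with h | h
            · exact h.symm
            · cases h
          have heq := (ite_bool_true.mp (h1 z0 hz0))
          rw [hw']
          exact hstab i x z0 hz0 (heq ▸ rfl)
        · -- both values occur, so gc i x = univ
          push_neg at h0 h1
          obtain ⟨z2, hz2, hz2'⟩ := h0
          obtain ⟨z1, hz1, hz1'⟩ := h1
          have hone : BM.one ∈ gc i x := by
            have heq : gc i (fun j => BM.ofBool (z2 j)) = {BM.one} := by
              by_contra hne
              exact hz2' (ite_bool_false.mpr hne)
            exact hstab i x z2 hz2 (heq ▸ rfl)
          have hzero : BM.zero ∈ gc i x := by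
            have hnot : gc i (fun j => BM.ofBool (z1 j)) ≠ {BM.one} := by
              intro heq
              exact hz1' (ite_bool_true.mpr heq)
            exact hstab i x z1 hz1 (hzero_mem i z1 hnot)
          rcases hclosed i x with hc | hc | hc
          · rw [hc] at hone; simp at hone
          · rw [hc] at hzero; simp at hzero
          · rw [hc]; trivial
    -- the circuit
    set C0 : Circuit m 0 n := ⟨fun _ => RegType.simple, fun j => j.elim0,
      fun _ => RegType.simple,
      fun j => Comb.gate m (hb (Fin.cast (Nat.zero_add n) j))
        (fun t => Comb.input (Fin.castAdd 0 t)),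
      fun _ => BM.zero⟩ with hC0
    refine ⟨0, C0, ⟨fun _ => rfl, fun j => j.elim0, fun _ => rfl⟩, ?_⟩
    rintro ι y ⟨s, ⟨u, hu, hsucc⟩, rfl⟩
    have hu' : u = initState _ ι := hu
    subst hu'
    obtain ⟨o, ι', ⟨hr1, hr2⟩, hinp, hres⟩ := hsucc
    have ho : ∀ t : Fin m, o (Fin.castAdd 0 t) = ι t := by
      intro t
      exact congrArg Prod.fst (regRead_simple (hr1 t))
    apply hsub
    rw [hbit ι]
    intro i
    have hri := hres (Fin.natAdd 0 i)
    rw [Fin.append_right] at hri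
    have hcast : Fin.cast (Nat.zero_add n) (Fin.natAdd 0 i) = i := by
      apply Fin.ext
      simp
    have heval : evalLogic C0 o (Fin.natAdd 0 i) = kleene (hb i) ι := by
      show (Comb.gate m (hb (Fin.cast (Nat.zero_add n) (Fin.natAdd 0 i)))
        (fun t => Comb.input (Fin.castAdd 0 t))).eval o = _
      rw [hcast]
      simp only [Comb.eval]
      congr 1
      funext t
      exact ho t
    rw [heval] at hri
    exact hkey i ι hri
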